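/- arXiv:2101.08643 — 2 statements merged into one kernel-verified Lean document; each statement's English description precedes it below -/
import Mathlib

section
/- The function s₀(t) = I₀(t)/(t I₁(t)) is differentiable on (0,∞) with s₀'(t) = (1/t)(1 − I₀(t)²/I₁(t)²), and s₀'(t) < 0 for all t > 0; in particular s₀ is strictly decreasing on (0,∞). (This uses that I₁(t) < I₀(t) for all t > 0.) -/
open MeasureTheory ProbabilityTheory Real Filter Set

noncomputable section

/-- The noncentral chi-squared density with `k` degrees of freedom and
noncentrality parameter `ξ`, as a series (valid for `y > 0`). -/
def ncChiSqPDF (k : ℕ) (ξ : ℝ) (y : ℝ) : ℝ :=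
  ∑' j : ℕ, (Real.exp (-ξ/2) * (ξ/2)^j / (Nat.factorial j)) *
    (y ^ ((k:ℝ)/2 + j - 1) * Real.exp (-y/2) /
      ((2:ℝ) ^ ((k:ℝ)/2 + (j:ℝ)) * Real.Gamma ((k:ℝ)/2 + j)))

/-- The cumulative distribution function of the noncentral chi-squared distribution. -/
def ncChiSqCDF (k : ℕ) (ξ : ℝ) (y : ℝ) : ℝ :=
  ∫ t in (0:ℝ)..y, ncChiSqPDF k ξ t

/-- The modified Bessel function of the first kind. -/
def besselI (ν : ℝ) (z : ℝ) : ℝ :=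
  ∑' k : ℕ, (z/2) ^ (2*(k:ℝ) + ν) / (Nat.factorial k * Real.Gamma ((k:ℝ) + ν + 1))

/-- The information density with respect to the amplitude of the input, where `F` is the
law of the input amplitude `|X|` (a probability measure on `[0, A]`). -/
def infoDensity (N : ℕ) (F : Measure ℝ) (ρ : ℝ) : ℝ :=
  (∫ y in Set.Ioi (0:ℝ), ncChiSqPDF (2*N) (ρ^2) y *
      Real.log (y ^ ((N:ℝ) - 1) / ∫ t, ncChiSqPDF (2*N) (t^2) y ∂F))
    - Real.log ((2 * Real.exp 1)^N * Real.Gamma N)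

/-- The standard proper complex Gaussian with mean 0 and variance 2
(real and imaginary parts i.i.d. standard normal). -/
def stdComplexGaussian : Measure ℂ :=
  Measure.map (fun p : ℝ × ℝ => p.1 + p.2 * Complex.I)
    ((gaussianReal 0 1).prod (gaussianReal 0 1))

/-- The law of the noise vector `W` in `ℂ^N`: `N` i.i.d. proper complex Gaussian components. -/
def noiseLaw (N : ℕ) : Measure (Fin N → ℂ) := Measure.pi fun _ => stdComplexGaussian

open Classical in
/-- Kullback-Leibler divergence (natural logarithm), valued in extended reals. -/
def klDivE {α : Type*} [MeasurableSpace α] (μ ν : Measure α) : EReal :=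
  if μ ≪ ν ∧ Integrable (MeasureTheory.llr μ ν) μ
  then ((∫ x, MeasureTheory.llr μ ν x ∂μ : ℝ) : EReal) else ⊤

/-- Mutual information of two random variables, as the KL divergence between the joint law
and the product of the marginals. -/
def mutualInfoE {Ω α β : Type*} [MeasurableSpace Ω] [MeasurableSpace α] [MeasurableSpace β]
    (P : Measure Ω) (X : Ω → α) (Y : Ω → β) : EReal :=
  klDivE (Measure.map (fun ω => (X ω, Y ω)) P) ((Measure.map X P).prod (Measure.map Y P))

/-- Euclidean norm on `ℂ^N`. -/
def eucNorm {N : ℕ} (x : Fin N → ℂ) : ℝ := Real.sqrt (∑ i, ‖x i‖ ^ 2)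

/-- Mutual information between input and output of the channel `Y = X + W`,
for an input law `μ` on `ℂ^N`. -/
def channelMI (N : ℕ) (μ : Measure (Fin N → ℂ)) : EReal :=
  klDivE
    (Measure.map (fun p : (Fin N → ℂ) × (Fin N → ℂ) => (p.1, p.1 + p.2)) (μ.prod (noiseLaw N)))
    (μ.prod (Measure.map (fun p : (Fin N → ℂ) × (Fin N → ℂ) => p.1 + p.2) (μ.prod (noiseLaw N))))

/-- Capacity of the amplitude-constrained vector Gaussian channel. -/
def capacity (N : ℕ) (A : ℝ) : EReal :=
  ⨆ μ ∈ {μ : Measure (Fin N → ℂ) | IsProbabilityMeasure μ ∧ μ {x | eucNorm x ≤ A} = 1},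
    channelMI N μ


namespace Stmt8Aux

def c0 (k : ℕ) : ℝ := 1 / ((k.factorial : ℝ) * k.factorial)
def c1 (k : ℕ) : ℝ := 1 / ((k.factorial : ℝ) * (k+1).factorial)

def J0 (x : ℝ) : ℝ := ∑' k : ℕ, c0 k * x ^ (2*k)
def J1 (x : ℝ) : ℝ := ∑' k : ℕ, c1 k * x ^ (2*k+1)
def JH (x : ℝ) : ℝ := ∑' k : ℕ, c1 k * x ^ (2*k)

lemma coef_growth (k : ℕ) : (2 * (k:ℝ) + 1) ≤ 3 ^ (k+1) := by
  induction k with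
  | zero => norm_num
  | succ n ih =>
    have h3 : (0:ℝ) < 3 ^ (n+1) := by positivity
    push_cast at ih ⊢
    have h4 : (1:ℝ) ≤ 3 ^ (n+1) := by
      calc (1:ℝ) = 3^0 := by norm_num
        _ ≤ 3^(n+1) := pow_le_pow_right₀ (by norm_num) (Nat.zero_le _)
    have h6 : (3:ℝ)^(n+1+1) = 3*3^(n+1) := by ring
    rw [h6]; push_cast; linarith

lemma term_bound (C : ℝ) (a : ℕ → ℝ) (e : ℕ → ℕ)
    (ha : ∀ k, |a k| * k.factorial ≤ C ^ (k+1)) (he : ∀ k, e k ≤ 2*k+1)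
    (R : ℝ) (hR : 0 ≤ R) (x : ℝ) (hx : |x| ≤ R) (k : ℕ) :
    ‖a k * x ^ e k‖ ≤ (C * (R+1)) * (C * (R+1)^2) ^ k / k.factorial := by
  have hfac : (0:ℝ) < k.factorial := by positivity
  have hC : 0 ≤ C := by
    have := ha 0
    simp at this
    nlinarith [abs_nonneg (a 0)]
  have h1 : |x| ^ e k ≤ (R+1) ^ (2*k+1) := by
    calc |x| ^ e k ≤ (R+1) ^ e k := pow_le_pow_left₀ (abs_nonneg x) (by linarith) _
      _ ≤ (R+1) ^ (2*k+1) := pow_le_pow_right₀ (by linarith) (he k)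
  have h2 : |a k| ≤ C ^ (k+1) / k.factorial := by
    rw [le_div_iff₀ hfac]; exact ha k
  calc ‖a k * x ^ e k‖ = |a k| * |x| ^ e k := by
        rw [Real.norm_eq_abs, abs_mul, abs_pow]
    _ ≤ (C ^ (k+1) / k.factorial) * (R+1) ^ (2*k+1) := by
        apply mul_le_mul h2 h1 (by positivity) (by positivity)
    _ = (C * (R+1)) * (C * (R+1)^2) ^ k / k.factorial := by
        rw [mul_pow, ← pow_mul]
        field_simp
        ring

lemma sum_aux (D C' : ℝ) : Summable (fun k : ℕ => D * C' ^ k / k.factorial) := by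
  simpa [mul_div_assoc] using (Real.summable_pow_div_factorial C').mul_left D

lemma gen_summable (C : ℝ) (a : ℕ → ℝ) (e : ℕ → ℕ)
    (ha : ∀ k, |a k| * k.factorial ≤ C ^ (k+1)) (he : ∀ k, e k ≤ 2*k+1) (x : ℝ) :
    Summable (fun k => a k * x ^ e k) :=
  Summable.of_norm_bounded (sum_aux _ _)
    (term_bound C a e ha he |x| (abs_nonneg x) x le_rfl)

lemma deriv_coef_bound (C : ℝ) (hC : 1 ≤ C) (a : ℕ → ℝ) (e : ℕ → ℕ)
    (ha : ∀ k, |a k| * k.factorial ≤ C ^ (k+1)) (he : ∀ k, e k ≤ 2*k+1) :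
    ∀ k, |a k * e k| * k.factorial ≤ (3*C) ^ (k+1) := by
  intro k
  have h1 : |a k * (e k : ℝ)| * k.factorial = |a k| * k.factorial * e k := by
    rw [abs_mul, abs_of_nonneg (by positivity : (0:ℝ) ≤ (e k:ℝ))]; ring
  rw [h1]
  have he' : ((e k : ℝ)) ≤ 2*k+1 := by exact_mod_cast he k
  have hCp : (0:ℝ) ≤ C^(k+1) := by positivity
  calc |a k| * k.factorial * e k ≤ C^(k+1) * (2*(k:ℝ)+1) := by
        apply mul_le_mul (ha k) (by push_cast; linarith) (by positivity) hCp
    _ ≤ C^(k+1) * 3^(k+1) := by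
        have := coef_growth k
        exact mul_le_mul_of_nonneg_left this hCp
    _ = (3*C)^(k+1) := by rw [mul_pow]; ring

lemma gen_hasDerivAt (C : ℝ) (hC : 1 ≤ C) (a : ℕ → ℝ) (e : ℕ → ℕ)
    (ha : ∀ k, |a k| * k.factorial ≤ C ^ (k+1)) (he : ∀ k, e k ≤ 2*k+1) (x : ℝ) :
    HasDerivAt (fun y : ℝ => ∑' k, a k * y ^ e k)
      (∑' k, (a k * e k) * x ^ (e k - 1)) x := by
  set R : ℝ := |x| + 1 with hRdef
  have hR0 : 0 ≤ R := by positivity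
  have he' : ∀ k, e k - 1 ≤ 2*k+1 := fun k => le_trans (Nat.sub_le _ _) (he k)
  have ha' := deriv_coef_bound C hC a e ha he
  have hxmem : x ∈ Metric.ball (0:ℝ) R := by
    simp [Real.dist_eq, hRdef]
  have hg : ∀ (k : ℕ), ∀ y ∈ Metric.ball (0:ℝ) R,
      HasDerivAt (fun z : ℝ => a k * z ^ e k) ((a k * e k) * y ^ (e k - 1)) y := by
    intro k y _
    simpa [mul_assoc] using (hasDerivAt_pow (e k) y).const_mul (a k)
  have hg' : ∀ (k : ℕ), ∀ y ∈ Metric.ball (0:ℝ) R,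
      ‖(a k * e k) * y ^ (e k - 1)‖ ≤ ((3*C) * (R+1)) * ((3*C) * (R+1)^2)^k / k.factorial := by
    intro k y hy
    have hyR : |y| ≤ R := by
      rw [Metric.mem_ball, Real.dist_eq, sub_zero] at hy
      exact le_of_lt hy
    exact term_bound (3*C) (fun k => a k * e k) (fun k => e k - 1) ha' he' R hR0 y hyR k
  exact hasDerivAt_tsum_of_isPreconnected (sum_aux ((3*C) * (R+1)) ((3*C) * (R+1)^2))
    Metric.isOpen_ball (convex_ball (0:ℝ) R).isPreconnected
    hg hg' hxmem (gen_summable C a e ha he x) hxmem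

lemma c0_bound : ∀ k, |c0 k| * k.factorial ≤ (1:ℝ) ^ (k+1) := by
  intro k
  have h : (0:ℝ) < k.factorial := by positivity
  have h1 : (1:ℝ) ≤ k.factorial := by exact_mod_cast Nat.one_le_iff_ne_zero.2 k.factorial_ne_zero
  rw [c0, abs_of_nonneg (by positivity), one_pow]
  rw [div_mul_eq_mul_div, div_le_one (by positivity)]
  nlinarith

lemma c1_bound : ∀ k, |c1 k| * k.factorial ≤ (1:ℝ) ^ (k+1) := by
  intro k
  have h : (0:ℝ) < k.factorial := by positivity
  have h1 : (1:ℝ) ≤ (k+1).factorial := by exact_mod_cast Nat.one_le_iff_ne_zero.2 (k+1).factorial_ne_zero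
  rw [c1, abs_of_nonneg (by positivity), one_pow]
  rw [div_mul_eq_mul_div, div_le_one (by positivity)]
  nlinarith

lemma he0 : ∀ k : ℕ, 2*k ≤ 2*k+1 := fun k => by omega
lemma he1 : ∀ k : ℕ, 2*k+1 ≤ 2*k+1 := fun k => le_rfl

lemma besselI_zero_eq (z : ℝ) : besselI 0 z = J0 (z/2) := by
  unfold besselI J0 c0
  apply tsum_congr; intro k
  have h1 : (2*(k:ℝ) + 0) = ((2*k : ℕ):ℝ) := by push_cast; ring
  have h2 : ((k:ℝ) + 0 + 1) = ((k:ℝ) + 1) := by ring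
  rw [h1, Real.rpow_natCast, h2, Real.Gamma_nat_eq_factorial, one_div, inv_mul_eq_div]

lemma besselI_one_eq (z : ℝ) : besselI 1 z = J1 (z/2) := by
  unfold besselI J1 c1
  apply tsum_congr; intro k
  have h1 : (2*(k:ℝ) + 1) = ((2*k+1 : ℕ):ℝ) := by push_cast; ring
  have h2 : ((k:ℝ) + 1 + 1) = (((k+1:ℕ)):ℝ) + 1 := by push_cast; ring
  rw [h1, Real.rpow_natCast, h2, Real.Gamma_nat_eq_factorial, one_div, inv_mul_eq_div]

lemma J1_pos {x : ℝ} (hx : 0 < x) : 0 < J1 x := by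
  apply Summable.tsum_pos (gen_summable 1 c1 _ c1_bound he1 x) (fun k => ?_) 0
  · simp only [c1]
    have h : (0:ℝ) < (Nat.factorial 0 : ℝ) * (Nat.factorial 1 : ℝ) := by norm_num
    positivity
  · have h2 : (0:ℝ) < (k.factorial : ℝ) * ((k+1).factorial : ℝ) := by positivity
    have : 0 ≤ c1 k := by rw [c1]; positivity
    positivity

lemma hasDerivAt_J0 (x : ℝ) : HasDerivAt J0 (2 * J1 x) x := by
  have h := gen_hasDerivAt 1 le_rfl c0 (fun k => 2*k) c0_bound he0 x
  have hs : Summable (fun k => (c0 k * ((2*k : ℕ):ℝ)) * x ^ (2*k - 1)) :=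
    gen_summable 3 _ _ (by simpa using deriv_coef_bound 1 le_rfl c0 (fun k => 2*k) c0_bound he0)
      (fun k => by omega) x
  refine h.congr_deriv (Eq.symm ?_)
  rw [Summable.tsum_eq_zero_add hs]
  simp only [Nat.cast_zero, mul_zero, zero_mul, Nat.mul_zero, zero_add]
  rw [J1, ← tsum_mul_left]
  apply tsum_congr; intro k
  have hk : 2*(k+1) - 1 = 2*k+1 := by omega
  rw [hk, c0, c1]
  have h1 : ((k+1).factorial : ℝ) = (k+1) * k.factorial := by
    rw [Nat.factorial_succ]; push_cast; ring
  have h2 : (0:ℝ) < k.factorial := by positivity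
  rw [h1]
  push_cast
  field_simp

lemma hasDerivAt_J1 (x : ℝ) : HasDerivAt J1 (2 * J0 x - JH x) x := by
  have h := gen_hasDerivAt 1 le_rfl c1 (fun k => 2*k+1) c1_bound he1 x
  refine h.congr_deriv (Eq.symm ?_)
  have hsimp : (fun k => (c1 k * ((2*k+1 : ℕ):ℝ)) * x ^ (2*k+1 - 1))
      = fun k => (2 * (c0 k * x ^ (2*k)) - c1 k * x ^ (2*k)) := by
    funext k
    have hk : 2*k+1 - 1 = 2*k := by omega
    rw [hk, c0, c1]
    have h1 : ((k+1).factorial : ℝ) = (k+1) * k.factorial := by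
      rw [Nat.factorial_succ]; push_cast; ring
    have h2 : (0:ℝ) < k.factorial := by positivity
    rw [h1]
    push_cast
    field_simp
    ring
  rw [hsimp, Summable.tsum_sub ((gen_summable 1 c0 _ c0_bound he0 x).mul_left 2)
    (gen_summable 1 c1 _ c1_bound he0 x), tsum_mul_left, J0, JH]

lemma JH_mul (x : ℝ) : x * JH x = J1 x := by
  rw [JH, J1, ← tsum_mul_left]
  apply tsum_congr; intro k
  ring

lemma hasDerivAt_I0 (z : ℝ) : HasDerivAt (besselI 0) (besselI 1 z) z := by
  have hfun : besselI 0 = fun s => J0 (s/2) := funext besselI_zero_eq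
  have h := (hasDerivAt_J0 (z/2)).comp z ((hasDerivAt_id z).div_const 2)
  rw [hfun, besselI_one_eq]
  have h' : HasDerivAt (fun s : ℝ => J0 (s/2)) (2 * J1 (z/2) * (1/2)) z := h
  convert h' using 1
  ring

lemma hasDerivAt_I1 (z : ℝ) (hz : z ≠ 0) :
    HasDerivAt (besselI 1) (besselI 0 z - besselI 1 z / z) z := by
  have hfun : besselI 1 = fun s => J1 (s/2) := funext besselI_one_eq
  have h := (hasDerivAt_J1 (z/2)).comp z ((hasDerivAt_id z).div_const 2)
  rw [hfun, besselI_zero_eq]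
  have h' : HasDerivAt (fun s : ℝ => J1 (s/2)) ((2 * J0 (z/2) - JH (z/2)) * (1/2)) z := h
  convert h' using 1
  have hH := JH_mul (z/2)
  field_simp at hH ⊢
  linarith

lemma cont0 : Continuous (besselI 0) := by
  rw [funext besselI_zero_eq]
  have : Differentiable ℝ J0 := fun x => (hasDerivAt_J0 x).differentiableAt
  exact this.continuous.comp (continuous_id.div_const 2)

lemma cont1 : Continuous (besselI 1) := by
  rw [funext besselI_one_eq]
  have : Differentiable ℝ J1 := fun x => (hasDerivAt_J1 x).differentiableAt
  exact this.continuous.comp (continuous_id.div_const 2)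

lemma I0_zero : besselI 0 0 = 1 := by
  rw [besselI_zero_eq]
  norm_num [J0]
  rw [tsum_eq_single 0 (fun k hk => by
    have : 2*k ≠ 0 := by omega
    simp [zero_pow this])]
  simp [c0]

lemma I1_zero : besselI 1 0 = 0 := by
  rw [besselI_one_eq]
  norm_num [J1]

lemma I1_pos {z : ℝ} (hz : 0 < z) : 0 < besselI 1 z := by
  rw [besselI_one_eq]; exact J1_pos (by positivity)

lemma sq_lt {z : ℝ} (hz : 0 < z) : (besselI 1 z)^2 < (besselI 0 z)^2 := by
  set f : ℝ → ℝ := fun s => (besselI 0 s)^2 - (besselI 1 s)^2 with hf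
  have hmono : StrictMonoOn f (Set.Ici 0) := by
    apply strictMonoOn_of_deriv_pos (convex_Ici 0)
    · exact ((cont0.pow 2).sub (cont1.pow 2)).continuousOn
    · intro x hx
      rw [interior_Ici] at hx
      have hx0 : 0 < x := hx
      have hd : HasDerivAt f (2 * (besselI 1 x)^2 / x) x := by
        have h0 := (hasDerivAt_I0 x).pow 2
        have h1 := (hasDerivAt_I1 x hx0.ne').pow 2
        have h := h0.sub h1
        refine h.congr_deriv (Eq.symm ?_)
        field_simp
        ring
      rw [hd.deriv]
      have := I1_pos hx0
      positivity
  have h1 := hmono (le_refl (0:ℝ)) (le_of_lt hz) hz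
  simp only [hf, I0_zero, I1_zero] at h1
  norm_num at h1
  linarith

lemma main (t : ℝ) (ht : 0 < t) :
    HasDerivAt (fun s : ℝ => besselI 0 s / (s * besselI 1 s))
      ((1/t) * (1 - (besselI 0 t)^2 / (besselI 1 t)^2)) t := by
  have hI1 := I1_pos ht
  have hden : t * besselI 1 t ≠ 0 := (mul_pos ht hI1).ne'
  have hu := hasDerivAt_I0 t
  have hv : HasDerivAt (fun s : ℝ => s * besselI 1 s)
      (1 * besselI 1 t + t * (besselI 0 t - besselI 1 t / t)) t :=
    (hasDerivAt_id t).mul (hasDerivAt_I1 t ht.ne')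
  have h := hu.div hv hden
  refine h.congr_deriv (Eq.symm ?_)
  field_simp
  ring

end Stmt8Aux

/-- The function `s₀(t) = I₀(t)/(t I₁(t))` is differentiable on `(0, ∞)`
with derivative `(1/t)(1 − I₀(t)²/I₁(t)²) < 0`; in particular it is strictly decreasing. -/
theorem stmt8 :
    (∀ t : ℝ, 0 < t →
      HasDerivAt (fun s : ℝ => besselI 0 s / (s * besselI 1 s))
        ((1/t) * (1 - (besselI 0 t)^2 / (besselI 1 t)^2)) t ∧
      (1/t) * (1 - (besselI 0 t)^2 / (besselI 1 t)^2) < 0) ∧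
    StrictAntiOn (fun s : ℝ => besselI 0 s / (s * besselI 1 s)) (Set.Ioi 0) := by
  have main : ∀ t : ℝ, 0 < t →
      HasDerivAt (fun s : ℝ => besselI 0 s / (s * besselI 1 s))
        ((1/t) * (1 - (besselI 0 t)^2 / (besselI 1 t)^2)) t ∧
      (1/t) * (1 - (besselI 0 t)^2 / (besselI 1 t)^2) < 0 := by
    intro t ht
    refine ⟨Stmt8Aux.main t ht, ?_⟩
    have hI1 := Stmt8Aux.I1_pos ht
    have hsq := Stmt8Aux.sq_lt ht
    have h1 : 1 < (besselI 0 t)^2 / (besselI 1 t)^2 := by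
      rw [lt_div_iff₀ (by positivity)]
      linarith
    apply mul_neg_of_pos_of_neg (by positivity)
    linarith
  refine ⟨main, ?_⟩
  apply strictAntiOn_of_deriv_neg (convex_Ioi 0)
  · intro x hx
    exact ((main x hx).1).differentiableAt.continuousAt.continuousWithinAt
  · intro x hx
    rw [interior_Ioi] at hx
    rw [(main x hx).1.deriv]
    exact (main x hx).2


end
end

section
/- For every integer N ≥ 1, every ρ > 0 and every y > 0, lim_{h → 0} ( F_{χ²_{2N}(ρ²)}(y) − F_{χ²_{2N}((ρ+h)²)}(y) ) / ( h(2ρ + h) ) = f_{χ²_{2(N+1)}(ρ²)}(y); that is, the auxiliary density f_Q(y; ρ+h, ρ) = (F_{χ²_{2N}(ρ²)}(y) − F_{χ²_{2N}((ρ+h)²)}(y)) / ((ρ+h)² − ρ²) converges pointwise as h → 0 to the noncentral chi-squared density with 2(N+1) degrees of freedom and noncentrality ρ². -/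
open MeasureTheory ProbabilityTheory Real Filter Set

noncomputable section

noncomputable def nc_a (ξ : ℝ) (j : ℕ) : ℝ := Real.exp (-ξ/2) * (ξ/2)^j / (Nat.factorial j)
noncomputable def nc_q (m : ℕ) (t : ℝ) : ℝ := t^m * Real.exp (-t/2) / (2^(m+1) * Nat.factorial m)
noncomputable def nc_C (m : ℕ) (y : ℝ) : ℝ := ∫ t in (0:ℝ)..y, nc_q m t

lemma nc_term_eq (m j : ℕ) (ξ y : ℝ) :
    (Real.exp (-ξ/2) * (ξ/2)^j / (Nat.factorial j)) *
      (y ^ (((2*(m+1):ℕ):ℝ)/2 + j - 1) * Real.exp (-y/2) /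
        ((2:ℝ) ^ (((2*(m+1):ℕ):ℝ)/2 + (j:ℝ)) * Real.Gamma (((2*(m+1):ℕ):ℝ)/2 + j))) =
    nc_a ξ j * nc_q (m + j) y := by
  have h1 : ((2*(m+1):ℕ):ℝ)/2 = (m:ℝ)+1 := by push_cast; ring
  have h2 : (m:ℝ)+1 + (j:ℝ) - 1 = ((m+j:ℕ):ℝ) := by push_cast; ring
  have h3 : (m:ℝ)+1 + (j:ℝ) = ((m+j:ℕ):ℝ) + 1 := by push_cast; ring
  rw [h1, h2, h3, Real.rpow_natCast, Real.Gamma_nat_eq_factorial,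
    show ((m+j:ℕ):ℝ) + 1 = ((m+j+1:ℕ):ℝ) by push_cast; ring, Real.rpow_natCast]
  simp only [nc_a, nc_q]

lemma nc_pdf_eq (m : ℕ) (ξ y : ℝ) :
    ncChiSqPDF (2*(m+1)) ξ y = ∑' j, nc_a ξ j * nc_q (m + j) y :=
  tsum_congr fun j => nc_term_eq m j ξ y

lemma nc_q_nonneg (m : ℕ) {t : ℝ} (ht : 0 ≤ t) : 0 ≤ nc_q m t := by
  unfold nc_q; positivity

lemma nc_q_cont (m : ℕ) : Continuous (nc_q m) := by
  unfold nc_q; fun_prop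

lemma nc_q_le (m : ℕ) {t M : ℝ} (ht : 0 ≤ t) (htM : t ≤ M) (hM : 1 ≤ M) :
    nc_q m t ≤ M ^ m := by
  have h1 : nc_q m t ≤ t^m * Real.exp (-t/2) := by
    apply div_le_self (by positivity)
    have : (1:ℝ) ≤ 2^(m+1) := one_le_pow₀ (by norm_num)
    have : (1:ℝ) ≤ (Nat.factorial m : ℝ) := by exact_mod_cast Nat.one_le_iff_ne_zero.mpr (Nat.factorial_ne_zero m)
    nlinarith
  refine h1.trans ?_
  have h2 : t^m ≤ M^m := pow_le_pow_left₀ ht htM m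
  have h3 : Real.exp (-t/2) ≤ 1 := by simpa using Real.exp_le_exp.2 (show -t/2 ≤ (0:ℝ) by linarith)
  nlinarith [pow_nonneg ht m]

lemma nc_C_nonneg (m : ℕ) {y : ℝ} (hy : 0 ≤ y) : 0 ≤ nc_C m y :=
  intervalIntegral.integral_nonneg hy (fun t ht => nc_q_nonneg m ht.1)

lemma nc_C_le (m : ℕ) {y M : ℝ} (hy : 0 ≤ y) (hyM : y ≤ M) (hM : 1 ≤ M) :
    nc_C m y ≤ y * M ^ m := by
  have h := intervalIntegral.integral_mono_on (μ := volume) (f := nc_q m)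
    (g := fun _ => M ^ m) hy ((nc_q_cont m).intervalIntegrable 0 y)
    (intervalIntegrable_const) (fun t ht => nc_q_le m ht.1 (ht.2.trans hyM) hM)
  simpa [nc_C] using h

lemma nc_C_sub (m : ℕ) {y : ℝ} (hy : 0 ≤ y) :
    nc_C m y - nc_C (m+1) y = 2 * nc_q (m+1) y := by
  have hd : ∀ t : ℝ, HasDerivAt (fun t => t^(m+1) * Real.exp (-t/2) / (2^(m+1) * Nat.factorial (m+1)))
      (nc_q m t - nc_q (m+1) t) t := by
    intro t
    have h1 : HasDerivAt (fun t : ℝ => t^(m+1)) ((m+1 : ℕ) * t^m) t := by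
      simpa using hasDerivAt_pow (m+1) t
    have h0 : HasDerivAt (fun t : ℝ => -t/2) (-1/2) t := by
      simpa using ((hasDerivAt_id t).neg.div_const 2)
    have h2 : HasDerivAt (fun t : ℝ => Real.exp (-t/2)) (Real.exp (-t/2) * (-1/2)) t := h0.exp
    have h3 : HasDerivAt (fun t : ℝ => t^(m+1) * Real.exp (-t/2) / (2^(m+1) * Nat.factorial (m+1)))
        ((((m+1:ℕ):ℝ) * t^m * Real.exp (-t/2) + t^(m+1) * (Real.exp (-t/2) * (-1/2))) /
          (2^(m+1) * Nat.factorial (m+1))) t :=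
      (h1.mul h2).div_const ((2:ℝ)^(m+1) * Nat.factorial (m+1))
    convert h3 using 1
    simp only [nc_q, Nat.factorial_succ]
    have hfm : (Nat.factorial m : ℝ) ≠ 0 := by exact_mod_cast Nat.factorial_ne_zero m
    push_cast
    field_simp
    ring
  have hint : IntervalIntegrable (fun t => nc_q m t - nc_q (m+1) t) volume 0 y :=
    ((nc_q_cont m).sub (nc_q_cont (m+1))).intervalIntegrable 0 y
  have := intervalIntegral.integral_eq_sub_of_hasDerivAt (fun t _ => hd t) hint
  rw [intervalIntegral.integral_sub ((nc_q_cont m).intervalIntegrable 0 y)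
    ((nc_q_cont (m+1)).intervalIntegrable 0 y)] at this
  unfold nc_C
  rw [this]
  simp only [nc_q, Nat.factorial_succ]
  rw [zero_pow (Nat.succ_ne_zero m)]
  have hfm : (Nat.factorial m : ℝ) ≠ 0 := by exact_mod_cast Nat.factorial_ne_zero m
  push_cast
  field_simp
  ring

lemma nc_a_nonneg {ξ : ℝ} (hξ : 0 ≤ ξ) (j : ℕ) : 0 ≤ nc_a ξ j := by
  unfold nc_a; positivity

lemma nc_a_le {ξ B : ℝ} (hξ : 0 ≤ ξ) (hB : ξ/2 ≤ B) (j : ℕ) :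
    nc_a ξ j ≤ B^j / Nat.factorial j := by
  unfold nc_a
  have h1 : Real.exp (-ξ/2) ≤ 1 := by
    simpa using Real.exp_le_exp.2 (show -ξ/2 ≤ (0:ℝ) by linarith)
  have h2 : (ξ/2)^j ≤ B^j := pow_le_pow_left₀ (by linarith) hB j
  have h3 : (0:ℝ) < Nat.factorial j := by exact_mod_cast Nat.factorial_pos j
  have h4 : (0:ℝ) ≤ (ξ/2)^j := by positivity
  apply div_le_div_of_nonneg_right ?_ h3.le |>.trans_eq rfl
  nlinarith [Real.exp_pos (-ξ/2)]

/-- shifted bound sequence: `nc_b 0 = 0`, `nc_b (j+1) = B^j/j!` -/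
noncomputable def nc_ub (B : ℝ) : ℕ → ℝ
  | 0 => 0
  | (j+1) => B^j / Nat.factorial j

noncomputable def nc_b (ξ : ℝ) : ℕ → ℝ
  | 0 => 0
  | (j+1) => nc_a ξ j

lemma nc_b_le {ξ B : ℝ} (hξ : 0 ≤ ξ) (hB : ξ/2 ≤ B) (j : ℕ) :
    nc_b ξ j ≤ nc_ub B j := by
  cases j with
  | zero => simp [nc_b, nc_ub]
  | succ j => exact nc_a_le hξ hB j

lemma nc_b_nonneg {ξ : ℝ} (hξ : 0 ≤ ξ) (j : ℕ) : 0 ≤ nc_b ξ j := by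
  cases j with
  | zero => simp [nc_b]
  | succ j => exact nc_a_nonneg hξ j

lemma summable_geom_fact (c r M : ℝ) (m : ℕ) :
    Summable (fun j : ℕ => c * (r^j / Nat.factorial j) * M^(m+j)) := by
  have h : Summable (fun j : ℕ => (c * M^m) * ((r*M)^j / Nat.factorial j)) :=
    (Real.summable_pow_div_factorial (r*M)).mul_left _
  refine h.congr fun j => ?_
  rw [mul_pow]
  ring

lemma summable_ub_M (B M : ℝ) (m : ℕ) (y : ℝ) :
    Summable (fun j : ℕ => nc_ub B j * (y * M^(m+j))) := by
  apply (summable_nat_add_iff 1).mp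
  have h : Summable (fun j : ℕ => (y*M) * (B^j / Nat.factorial j) * M^(m+j)) :=
    summable_geom_fact (y*M) B M m
  refine h.congr fun j => ?_
  simp only [nc_ub]
  rw [pow_add M m (j+1), pow_succ]
  ring

lemma hasDerivAt_nc_a (j : ℕ) (ξ : ℝ) :
    HasDerivAt (fun ξ => nc_a ξ j) ((1/2) * (nc_b ξ j - nc_a ξ j)) ξ := by
  have h0 : HasDerivAt (fun ξ : ℝ => -ξ/2) (-1/2) ξ := by
    simpa using ((hasDerivAt_id ξ).neg.div_const 2)
  have hexp : HasDerivAt (fun ξ : ℝ => Real.exp (-ξ/2)) (Real.exp (-ξ/2) * (-1/2)) ξ := h0.exp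
  have hhalf : HasDerivAt (fun ξ : ℝ => ξ/2) (1/2) ξ := by
    simpa using (hasDerivAt_id ξ).div_const 2
  have hpow : HasDerivAt (fun ξ : ℝ => (ξ/2)^j) ((j:ℝ) * (ξ/2)^(j-1) * (1/2)) ξ :=
    (hasDerivAt_pow j (ξ/2)).comp ξ hhalf
  have h := (hexp.mul hpow).div_const (Nat.factorial j : ℝ)
  have he : HasDerivAt (fun ξ => nc_a ξ j)
      ((Real.exp (-ξ/2) * (-1/2) * (ξ/2)^j + Real.exp (-ξ/2) * ((j:ℝ) * (ξ/2)^(j-1) * (1/2)))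
        / (Nat.factorial j : ℝ)) ξ := h
  convert he using 1
  cases j with
  | zero => simp [nc_a, nc_b]; ring
  | succ j =>
    simp only [nc_b, nc_a, Nat.factorial_succ, Nat.succ_sub_one]
    have hfm : (Nat.factorial j : ℝ) ≠ 0 := by exact_mod_cast Nat.factorial_ne_zero j
    push_cast
    field_simp
    ring

lemma nc_q_integrableOn (m : ℕ) (y : ℝ) : IntegrableOn (nc_q m) (Ioc 0 y) volume :=
  ((nc_q_cont m).integrableOn_Icc (a := 0) (b := y)).mono_set Ioc_subset_Icc_self

lemma nc_int_q (m : ℕ) {y : ℝ} (hy : 0 ≤ y) :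
    ∫ t in Ioc (0:ℝ) y, nc_q m t = nc_C m y := by
  rw [nc_C, intervalIntegral.integral_of_le hy]

lemma nc_norm_int_le (m : ℕ) {y M : ℝ} (hy : 0 < y) (hyM : y ≤ M) (hM : 1 ≤ M)
    {c : ℝ} (hc : 0 ≤ c) :
    ∫ t in Ioc (0:ℝ) y, ‖c * nc_q m t‖ ≤ c * M^m * y := by
  have h1 : ∫ t in Ioc (0:ℝ) y, ‖c * nc_q m t‖ ≤ ∫ _t in Ioc (0:ℝ) y, c * M^m := by
    apply setIntegral_mono_on
    · exact ((nc_q_integrableOn m y).const_mul c).norm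
    · exact integrableOn_const (by simp [Real.volume_Ioc])
    · exact measurableSet_Ioc
    · intro t ht
      rw [norm_mul, Real.norm_of_nonneg hc, Real.norm_of_nonneg (nc_q_nonneg m ht.1.le)]
      exact mul_le_mul_of_nonneg_left (nc_q_le m ht.1.le (ht.2.trans hyM) hM) hc
  refine h1.trans (le_of_eq ?_)
  rw [setIntegral_const, smul_eq_mul, Real.volume_real_Ioc_of_le hy.le, sub_zero]
  ring

lemma nc_cdf_eq (m : ℕ) {ξ y : ℝ} (hξ : 0 ≤ ξ) (hy : 0 < y) :
    ncChiSqCDF (2*(m+1)) ξ y = ∑' j, nc_a ξ j * nc_C (m + j) y := by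
  set M := max 1 y with hMdef
  have hM : 1 ≤ M := le_max_left 1 y
  have hyM : y ≤ M := le_max_right 1 y
  have hM0 : (0:ℝ) ≤ M := by linarith
  have hswap : ∑' j, ∫ t in Ioc (0:ℝ) y, nc_a ξ j * nc_q (m + j) t
      = ∫ t in Ioc (0:ℝ) y, ∑' j, nc_a ξ j * nc_q (m + j) t := by
    apply MeasureTheory.integral_tsum_of_summable_integral_norm
    · exact fun j => (nc_q_integrableOn (m+j) y).const_mul _
    · apply Summable.of_nonneg_of_le
        (fun j => integral_nonneg (fun t => norm_nonneg _))
        (fun j => nc_norm_int_le (m+j) hy hyM hM (nc_a_nonneg hξ j))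
      refine Summable.of_nonneg_of_le
        (fun j => mul_nonneg (mul_nonneg (nc_a_nonneg hξ j) (pow_nonneg hM0 _)) hy.le)
        ?_ (summable_geom_fact y (ξ/2) M m)
      · intro j
        calc nc_a ξ j * M^(m+j) * y
            ≤ ((ξ/2)^j / Nat.factorial j) * M^(m+j) * y := by
              apply mul_le_mul_of_nonneg_right
                (mul_le_mul_of_nonneg_right (nc_a_le hξ le_rfl j) (by positivity)) hy.le
          _ = y * ((ξ/2)^j / Nat.factorial j) * M^(m+j) := by ring
  rw [ncChiSqCDF, intervalIntegral.integral_of_le hy.le]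
  have hint : ∀ t : ℝ, ncChiSqPDF (2*(m+1)) ξ t = ∑' j, nc_a ξ j * nc_q (m + j) t :=
    fun t => nc_pdf_eq m ξ t
  rw [setIntegral_congr_fun measurableSet_Ioc (fun t _ => hint t), ← hswap]
  refine tsum_congr fun j => ?_
  rw [MeasureTheory.integral_const_mul, nc_int_q _ hy.le]

lemma nc_ub_nonneg {B : ℝ} (hB : 0 ≤ B) (j : ℕ) : 0 ≤ nc_ub B j := by
  cases j with
  | zero => simp [nc_ub]
  | succ j => unfold nc_ub; positivity

lemma nc_hasDerivAt (m : ℕ) {x0 y : ℝ} (hx0 : 0 < x0) (hy : 0 < y) :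
    HasDerivAt (fun ξ => ∑' j, nc_a ξ j * nc_C (m + j) y)
      (-(ncChiSqPDF (2*(m+2)) x0 y)) x0 := by
  set B := (x0+1)/2 with hBdef
  have hB0 : 0 < B := by positivity
  set M := max 1 y with hMdef
  have hM : 1 ≤ M := le_max_left 1 y
  have hyM : y ≤ M := le_max_right 1 y
  have hM0 : (0:ℝ) ≤ M := by linarith
  set s : Set ℝ := Ioo (x0/2) (x0+1) with hsdef
  have hx0s : x0 ∈ s := ⟨by linarith, by linarith⟩
  have hsp : ∀ ξ ∈ s, 0 ≤ ξ ∧ ξ/2 ≤ B := by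
    rintro ξ ⟨h1, h2⟩
    constructor <;> [linarith; · rw [hBdef]; linarith]
  have hCle : ∀ j : ℕ, |nc_C (m+j) y| ≤ y * M^(m+j) := fun j => by
    rw [abs_of_nonneg (nc_C_nonneg _ hy.le)]
    exact nc_C_le _ hy.le hyM hM
  -- the uniform bound
  set u : ℕ → ℝ := fun j => (1/2) * (nc_ub B j + B^j / Nat.factorial j) * (y * M^(m+j)) with hu
  have hu_sum : Summable u := by
    have h1 : Summable (fun j => nc_ub B j * (y * M^(m+j))) := summable_ub_M B M m y
    have h2 : Summable (fun j => (B^j / Nat.factorial j) * (y * M^(m+j))) := by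
      refine (summable_geom_fact y B M m).congr fun j => ?_
      ring
    refine ((h1.add h2).mul_left (1/2)).congr fun j => ?_
    simp only [u]
    ring
  have hbound : ∀ (j : ℕ) (ξ : ℝ), ξ ∈ s →
      ‖(1/2) * (nc_b ξ j - nc_a ξ j) * nc_C (m+j) y‖ ≤ u j := by
    intro j ξ hξs
    obtain ⟨hξ0, hξB⟩ := hsp ξ hξs
    have hab : |nc_b ξ j - nc_a ξ j| ≤ nc_ub B j + B^j / Nat.factorial j := by
      have h1 := nc_b_le hξ0 hξB j
      have h2 := nc_a_le hξ0 hξB j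
      have h3 := nc_b_nonneg hξ0 j
      have h4 := nc_a_nonneg hξ0 j
      rw [abs_le]
      constructor <;> linarith
    rw [Real.norm_eq_abs, abs_mul, abs_mul]
    calc |(1/2:ℝ)| * |nc_b ξ j - nc_a ξ j| * |nc_C (m+j) y|
        ≤ |(1/2:ℝ)| * (nc_ub B j + B^j / Nat.factorial j) * (y * M^(m+j)) := by
          apply mul_le_mul (mul_le_mul_of_nonneg_left hab (abs_nonneg _)) (hCle j)
            (abs_nonneg _) (mul_nonneg (abs_nonneg _) (add_nonneg (nc_ub_nonneg hB0.le j)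
              (div_nonneg (pow_nonneg hB0.le j) (Nat.cast_nonneg _))))
      _ = u j := by rw [abs_of_nonneg (by norm_num : (0:ℝ) ≤ 1/2)]
  have hsummand : ∀ ξ ∈ s, Summable (fun j => nc_a ξ j * nc_C (m+j) y) := by
    intro ξ hξs
    obtain ⟨hξ0, hξB⟩ := hsp ξ hξs
    refine Summable.of_nonneg_of_le
      (fun j => mul_nonneg (nc_a_nonneg hξ0 j) (nc_C_nonneg _ hy.le))
      (fun j => ?_)
      ((summable_geom_fact y B M m).congr
        (show ∀ j, y * (B^j / Nat.factorial j) * M^(m+j)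
            = (B^j / Nat.factorial j) * (y * M^(m+j)) from fun j => by ring))
    exact mul_le_mul (nc_a_le hξ0 hξB j) ((le_abs_self _).trans (hCle j))
      (nc_C_nonneg _ hy.le) (div_nonneg (pow_nonneg hB0.le j) (Nat.cast_nonneg _))
  have hmain : HasDerivAt (fun ξ => ∑' j, nc_a ξ j * nc_C (m + j) y)
      (∑' j, (1/2) * (nc_b x0 j - nc_a x0 j) * nc_C (m+j) y) x0 := by
    refine hasDerivAt_of_tendstoUniformlyOn (isOpen_Ioo : IsOpen s)
      (tendstoUniformlyOn_tsum_nat hu_sum hbound)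
      (f := fun nn ξ => ∑ j ∈ Finset.range nn, nc_a ξ j * nc_C (m+j) y) ?_ ?_ hx0s
    · exact Eventually.of_forall fun nn ξ _ =>
        HasDerivAt.fun_sum fun j _ => (hasDerivAt_nc_a j ξ).mul_const _
    · exact fun ξ hξs => ((hsummand ξ hξs).hasSum).tendsto_sum_nat
  convert hmain using 1
  -- identify the derivative series with -pdf
  obtain ⟨hx00, hxB⟩ := hsp x0 hx0s
  have Sa : Summable (fun j => nc_a x0 j * nc_C (m+j) y) := hsummand x0 hx0s
  have Sb : Summable (fun j => nc_b x0 j * nc_C (m+j) y) := by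
    refine Summable.of_nonneg_of_le
      (fun j => mul_nonneg (nc_b_nonneg hx00 j) (nc_C_nonneg _ hy.le))
      (fun j => ?_) (summable_ub_M B M m y)
    exact mul_le_mul (nc_b_le hx00 hxB j) ((le_abs_self _).trans (hCle j))
      (nc_C_nonneg _ hy.le) (nc_ub_nonneg hB0.le j)
  have Sa' : Summable (fun j => nc_a x0 j * nc_C (m+1+j) y) := by
    refine Summable.of_nonneg_of_le
      (fun j => mul_nonneg (nc_a_nonneg hx00 j) (nc_C_nonneg _ hy.le))
      (fun j => ?_)
      ((summable_geom_fact y B M (m+1)).congr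
        (show ∀ j, y * (B^j / Nat.factorial j) * M^(m+1+j)
            = (B^j / Nat.factorial j) * (y * M^(m+1+j)) from fun j => by ring))
    exact mul_le_mul (nc_a_le hx00 hxB j) (nc_C_le _ hy.le hyM hM)
      (nc_C_nonneg _ hy.le) (div_nonneg (pow_nonneg hB0.le j) (Nat.cast_nonneg _))
  have hb_shift : ∑' j, nc_b x0 j * nc_C (m+j) y = ∑' j, nc_a x0 j * nc_C (m+1+j) y := by
    rw [Summable.tsum_eq_zero_add Sb]
    simp only [nc_b]
    rw [zero_mul, zero_add]
    exact tsum_congr fun j => by rw [show m + (j+1) = m+1+j by omega]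
  calc -(ncChiSqPDF (2*(m+2)) x0 y)
      = -(∑' j, nc_a x0 j * nc_q (m+1+j) y) := by rw [nc_pdf_eq (m+1)]
    _ = (1/2) * ∑' j, (-2) * (nc_a x0 j * nc_q (m+1+j) y) := by
        rw [tsum_mul_left]; ring
    _ = (1/2) * ∑' j, (nc_a x0 j * nc_C (m+1+j) y - nc_a x0 j * nc_C (m+j) y) := by
        congr 1
        refine tsum_congr fun j => ?_
        have h := nc_C_sub (m+j) hy.le
        have h2 : nc_C (m+1+j) y - nc_C (m+j) y = -(2 * nc_q (m+1+j) y) := by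
          rw [show m+1+j = (m+j)+1 by omega] at *
          linarith
        rw [← mul_sub, h2]
        ring
    _ = (1/2) * (∑' j, nc_a x0 j * nc_C (m+1+j) y - ∑' j, nc_a x0 j * nc_C (m+j) y) := by
        rw [Summable.tsum_sub Sa' Sa]
    _ = ∑' j, (1/2) * (nc_b x0 j - nc_a x0 j) * nc_C (m+j) y := by
        rw [← hb_shift, ← Summable.tsum_sub Sb Sa, ← tsum_mul_left]
        exact tsum_congr fun j => by ring


/-- The auxiliary density `f_Q(y; ρ+h, ρ)` converges pointwise, as `h → 0`,
to the noncentral chi-squared density with `2(N+1)` degrees of freedom and noncentrality `ρ²`. -/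
theorem stmt11 (N : ℕ) (hN : 1 ≤ N) (ρ : ℝ) (hρ : 0 < ρ) (y : ℝ) (hy : 0 < y) :
    Tendsto (fun h : ℝ =>
        (ncChiSqCDF (2*N) (ρ^2) y - ncChiSqCDF (2*N) ((ρ+h)^2) y) / (h * (2*ρ + h)))
      (nhdsWithin 0 {(0:ℝ)}ᶜ) (nhds (ncChiSqPDF (2*(N+1)) (ρ^2) y)) := by
  obtain ⟨m, rfl⟩ : ∃ m, N = m + 1 := ⟨N - 1, (Nat.succ_pred_eq_of_pos hN).symm⟩
  set x0 := ρ^2 with hx0def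
  have hx0 : 0 < x0 := by positivity
  set g : ℝ → ℝ := fun ξ => ∑' j, nc_a ξ j * nc_C (m + j) y with hgdef
  have hder : HasDerivAt g (-(ncChiSqPDF (2*(m+1+1)) x0 y)) x0 := by
    have h22 : 2*(m+2) = 2*(m+1+1) := by norm_num
    have := nc_hasDerivAt m hx0 hy
    rwa [h22] at this
  have hslope := hasDerivAt_iff_tendsto_slope.mp hder
  have hcont : Continuous (fun h : ℝ => (ρ+h)^2) := by continuity
  have hc0 : Tendsto (fun h : ℝ => (ρ+h)^2) (nhds 0) (nhds x0) := by
    have := hcont.tendsto 0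
    simpa [hx0def] using this
  have hφ : Tendsto (fun h : ℝ => (ρ+h)^2) (nhdsWithin 0 {(0:ℝ)}ᶜ)
      (nhdsWithin x0 {x0}ᶜ) := by
    rw [tendsto_nhdsWithin_iff]
    refine ⟨hc0.mono_left nhdsWithin_le_nhds, ?_⟩
    have h1 : ∀ᶠ h : ℝ in nhds 0, h ∈ Ioo (-(2*ρ)) (2*ρ) :=
      Ioo_mem_nhds (by linarith) (by linarith)
    filter_upwards [h1.filter_mono nhdsWithin_le_nhds, self_mem_nhdsWithin]
      with h hball hne
    have hne' : h ≠ 0 := hne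
    have h2 : 0 < 2*ρ + h := by have := hball.1; linarith
    intro heq
    have heq' : (ρ+h)^2 = x0 := heq
    have : h * (2*ρ + h) = 0 := by rw [hx0def] at heq'; nlinarith [heq']
    rcases mul_eq_zero.mp this with h' | h'
    · exact hne' h'
    · linarith
  have hcomp : Tendsto (fun h : ℝ => -(slope g x0 ((ρ+h)^2)))
      (nhdsWithin 0 {(0:ℝ)}ᶜ) (nhds (ncChiSqPDF (2*(m+1+1)) x0 y)) := by
    have := (hslope.comp hφ).neg
    simpa using this
  refine Tendsto.congr' ?_ hcomp
  have hs_mem : ∀ᶠ h : ℝ in nhdsWithin 0 {(0:ℝ)}ᶜ, (ρ+h)^2 ∈ Ioo (x0/2) (x0+1) :=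
    (hc0.eventually (Ioo_mem_nhds (by linarith) (by linarith))).filter_mono
      nhdsWithin_le_nhds
  filter_upwards [hs_mem, self_mem_nhdsWithin] with h hmem hne
  have hne' : h ≠ 0 := hne
  have hξ0 : (0:ℝ) ≤ (ρ+h)^2 := le_of_lt (lt_trans (by linarith) hmem.1)
  have hcdf1 : ncChiSqCDF (2*(m+1)) x0 y = g x0 := nc_cdf_eq m hx0.le hy
  have hcdf2 : ncChiSqCDF (2*(m+1)) ((ρ+h)^2) y = g ((ρ+h)^2) := nc_cdf_eq m hξ0 hy
  rw [slope_def_field, hcdf1, hcdf2,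
    show (ρ+h)^2 - x0 = h * (2*ρ + h) from by rw [hx0def]; ring, ← neg_div, neg_sub]

end
end
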